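/- Let X be a finite indecomposable q-cycle set and p : X → Y a surjective q-cycle set homomorphism. Then for all i, x ∈ X: σ_i(p⁻¹(p(x))) = p⁻¹(p(σ_i(x))) and δ_i(p⁻¹(p(x))) = p⁻¹(p(δ_i(x))). -/

import Mathlib

open Finset in
private lemma perm_le_eq {Y : Type*} [Fintype Y] (π : Equiv.Perm Y) (f : Y → ℕ)
    (h : ∀ y, f y ≤ f (π y)) : ∀ y, f y = f (π y) := by
  have hsum : ∑ y, f (π y) = ∑ y, f y := Equiv.sum_comp π f
  have := (Finset.sum_eq_sum_iff_of_le (fun y _ => h y)).mp hsum.symm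
  exact fun y => this y (Finset.mem_univ y)

open Finset in
private lemma fiber_image {X Y : Type*} [Fintype X] [Fintype Y]
    (p : X → Y) (e : Equiv.Perm X) (π : Equiv.Perm Y)
    (hcomm : ∀ z : X, p (e z) = π (p z)) (x : X) :
    ⇑e '' {z : X | p z = p x} = {z : X | p z = p (e x)} := by
  classical
  set F : Y → ℕ := fun y => (univ.filter (fun z => p z = y)).card with hF
  have hle : ∀ y, F y ≤ F (π y) := by
    intro y
    apply Finset.card_le_card_of_injOn e
    · intro z hz
      simp only [Finset.mem_coe, mem_filter, mem_univ, true_and] at hz ⊢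
      rw [hcomm, hz]
    · exact fun a _ b _ hab => e.injective hab
  have hcard := perm_le_eq π F hle (p x)
  have hfin : (univ.filter (fun z => p z = p x)).image e
      = univ.filter (fun z => p z = p (e x)) := by
    apply Finset.eq_of_subset_of_card_le
    · intro w hw
      simp only [mem_image, mem_filter, mem_univ, true_and] at hw ⊢
      obtain ⟨z, hz, rfl⟩ := hw
      rw [hcomm, hcomm, hz]
    · rw [Finset.card_image_of_injective _ e.injective]
      have : p (e x) = π (p x) := hcomm x
      rw [this]
      exact le_of_eq hcard.symm
  have := congrArg (fun s : Finset X => (s : Set X)) hfin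
  simpa [Finset.coe_image, Finset.coe_filter, Set.image] using this

/-- For an epimorphism p from a finite indecomposable q-cycle set X,
σ_i(p⁻¹(p(x))) = p⁻¹(p(σ_i(x))) and δ_i(p⁻¹(p(x))) = p⁻¹(p(δ_i(x))). -/
theorem qcs_epi_fiber_images {X Y : Type*} [Fintype X] [Fintype Y]
    (σ δ : X → Equiv.Perm X) (σ' δ' : Y → Equiv.Perm Y)
    (q1 : ∀ x y z : X, σ (σ x y) (σ x z) = σ (δ y x) (σ y z))
    (q2 : ∀ x y z : X, δ (δ x y) (δ x z) = δ (σ y x) (δ y z))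
    (q3 : ∀ x y z : X, δ (σ x y) (σ x z) = σ (δ y x) (δ y z))
    (q1' : ∀ x y z : Y, σ' (σ' x y) (σ' x z) = σ' (δ' y x) (σ' y z))
    (q2' : ∀ x y z : Y, δ' (δ' x y) (δ' x z) = δ' (σ' y x) (δ' y z))
    (q3' : ∀ x y z : Y, δ' (σ' x y) (σ' x z) = σ' (δ' y x) (δ' y z))
    (htrans : ∀ x y : X,
      ∃ g ∈ Subgroup.closure {g : Equiv.Perm X | ∃ x, g = σ x ∨ g = δ x}, g x = y)
    (p : X → Y) (hsurj : Function.Surjective p)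
    (hhom : ∀ x y : X, p (σ x y) = σ' (p x) (p y) ∧ p (δ x y) = δ' (p x) (p y)) :
    ∀ i x : X,
      (⇑(σ i) '' {z : X | p z = p x} = {z : X | p z = p (σ i x)}) ∧
      (⇑(δ i) '' {z : X | p z = p x} = {z : X | p z = p (δ i x)}) := by
  intro i x
  exact ⟨fiber_image p (σ i) (σ' (p i)) (fun z => (hhom i z).1) x,
         fiber_image p (δ i) (δ' (p i)) (fun z => (hhom i z).2) x⟩
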